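/- Let n ≥ 1 and let P be any n-qubit Pauli string different from the identity. Then the average over the random Hadamard layer satisfies (1/2) ∑_{t ∈ {0,1}} |⟨+|^⊗n (H^⊗n)^t · P · (H^⊗n)^t |+⟩^⊗n|² ≤ 1/2. (Core of Statement 1: a nonidentity Pauli error applied between the randomly activated initial and final Hadamard rounds of a trap circuit leaves the all-zero outcome with probability at most 1/2.) -/

import Mathlib

open Matrix

/-- The four single-qubit Pauli matrices I, X, Y, Z. -/
noncomputable def pauli : Fin 4 → Matrix (Fin 2) (Fin 2) ℂ :=
  ![!![1, 0; 0, 1], !![0, 1; 1, 0], !![0, -Complex.I; Complex.I, 0], !![1, 0; 0, -1]]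

/-- The `n`-qubit Pauli string `⊗ᵢ σ_{f i}`. -/
noncomputable def PauliString (n : ℕ) (f : Fin n → Fin 4) :
    Matrix (Fin n → Fin 2) (Fin n → Fin 2) ℂ :=
  Matrix.of fun x y => ∏ i, pauli (f i) (x i) (y i)

/-- The Hadamard matrix `H = (1/√2)!![1,1;1,-1]`. -/
noncomputable def Hmat : Matrix (Fin 2) (Fin 2) ℂ :=
  (1 / ((Real.sqrt 2 : ℝ) : ℂ)) • !![1, 1; 1, -1]

/-- The `n`-fold Kronecker power `H^⊗n`. -/
noncomputable def HadN (n : ℕ) : Matrix (Fin n → Fin 2) (Fin n → Fin 2) ℂ :=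
  Matrix.of fun x y => ∏ i, Hmat (x i) (y i)

/-- The `n`-fold tensor power `|+⟩^⊗n`. -/
noncomputable def plusVec (n : ℕ) : (Fin n → Fin 2) → ℂ :=
  fun _ => (1 / ((Real.sqrt 2 : ℝ) : ℂ)) ^ n

/-- The matrix element `⟨+|^⊗n M |+⟩^⊗n`. -/
noncomputable def plusBraket (n : ℕ)
    (M : Matrix (Fin n → Fin 2) (Fin n → Fin 2) ℂ) : ℂ :=
  ∑ x, ∑ y, star (plusVec n x) * M x y * plusVec n y

-- string multiplication
lemma string_mul {n : ℕ} (A B : Fin n → Matrix (Fin 2) (Fin 2) ℂ) :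
    (Matrix.of fun x y : Fin n → Fin 2 => ∏ i, A i (x i) (y i)) *
      (Matrix.of fun x y : Fin n → Fin 2 => ∏ i, B i (x i) (y i)) =
    Matrix.of fun x y : Fin n → Fin 2 => ∏ i, (A i * B i) (x i) (y i) := by
  ext x y
  simp only [Matrix.mul_apply, Matrix.of_apply]
  rw [Fintype.prod_sum]
  apply Finset.sum_congr rfl
  intro u _
  rw [Finset.prod_mul_distrib]

lemma sqrt2_sq : ((Real.sqrt 2 : ℝ) : ℂ) * ((Real.sqrt 2 : ℝ) : ℂ) = 2 := by
  rw [← Complex.ofReal_mul, Real.mul_self_sqrt (by norm_num)]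
  norm_num

lemma string_braket {n : ℕ} (A : Fin n → Matrix (Fin 2) (Fin 2) ℂ) :
    plusBraket n (Matrix.of fun x y : Fin n → Fin 2 => ∏ i, A i (x i) (y i)) =
      ∏ i, ((2 : ℂ)⁻¹ * ∑ a, ∑ b, A i a b) := by
  have hstar : star ((1 / ((Real.sqrt 2 : ℝ) : ℂ)) ^ n) = (1 / ((Real.sqrt 2 : ℝ) : ℂ)) ^ n := by
    simp [Complex.star_def, Complex.conj_ofReal]
  unfold plusBraket plusVec
  simp only [hstar, Matrix.of_apply]
  have h1 : ∀ x : Fin n → Fin 2,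
      ∑ y : Fin n → Fin 2, ∏ i, A i (x i) (y i) = ∏ i, ∑ b, A i (x i) b := by
    intro x; rw [Fintype.prod_sum]
  have h2 : (∑ x : Fin n → Fin 2, ∏ i, ∑ b, A i (x i) b) = ∏ i, ∑ a, ∑ b, A i a b := by
    rw [Fintype.prod_sum]
  calc (∑ x : Fin n → Fin 2, ∑ y : Fin n → Fin 2,
        (1 / ((Real.sqrt 2 : ℝ) : ℂ)) ^ n * (∏ i, A i (x i) (y i)) * (1 / ((Real.sqrt 2 : ℝ) : ℂ)) ^ n)
      = ((1 / ((Real.sqrt 2 : ℝ) : ℂ)) ^ n * (1 / ((Real.sqrt 2 : ℝ) : ℂ)) ^ n) *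
          ∑ x : Fin n → Fin 2, ∑ y : Fin n → Fin 2, ∏ i, A i (x i) (y i) := by
        rw [Finset.mul_sum]; apply Finset.sum_congr rfl; intro x _
        rw [Finset.mul_sum]; apply Finset.sum_congr rfl; intro y _; ring
    _ = ((2 : ℂ)⁻¹) ^ n * ∏ i, ∑ a, ∑ b, A i a b := by
        rw [← pow_add]
        congr 1
        · rw [show n + n = 2 * n by ring, pow_mul]
          congr 1
          rw [div_pow, one_pow, sq, sqrt2_sq]
          norm_num
        · simp_rw [h1]; exact h2
    _ = ∏ i, ((2 : ℂ)⁻¹ * ∑ a, ∑ b, A i a b) := by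
        rw [Finset.prod_mul_distrib, Finset.prod_const, Finset.card_fin]

noncomputable def dval : Fin 2 → Fin 4 → ℂ := ![![1, 1, 0, 0], ![1, 0, 0, 1]]

lemma dval0 (k : Fin 4) : (2 : ℂ)⁻¹ * (∑ a, ∑ b, pauli k a b) = dval 0 k := by
  fin_cases k <;>
    simp [pauli, dval, Fin.sum_univ_two] <;> ring

lemma dval1 (k : Fin 4) :
    (2 : ℂ)⁻¹ * (∑ a, ∑ b, (Hmat * pauli k * Hmat) a b) = dval 1 k := by
  have hs := sqrt2_sq
  have hne : ((Real.sqrt 2 : ℝ) : ℂ) ≠ 0 := by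
    intro h; rw [h] at hs; simpa using hs
  have hsq : ((Real.sqrt 2 : ℝ) : ℂ)^2 = 2 := by rw [sq, hs]
  fin_cases k <;>
    · simp only [pauli, dval, Hmat, Matrix.mul_apply, Fin.sum_univ_two,
        Matrix.smul_apply, Matrix.cons_val', Matrix.cons_val_zero, Matrix.cons_val_one,
        Matrix.head_cons, Matrix.empty_val', Matrix.cons_val_fin_one, Matrix.head_fin_const,
        smul_eq_mul, Matrix.cons_val_fin_one]
      field_simp
      try ring_nf
      try simp [hsq]
      try ring

lemma term_eq (n : ℕ) (f : Fin n → Fin 4) (t : Fin 2) :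
    plusBraket n (HadN n ^ (t : ℕ) * PauliString n f * HadN n ^ (t : ℕ)) =
      ∏ i, dval t (f i) := by
  fin_cases t
  · simp only [Fin.val_zero, pow_zero, Matrix.one_mul, Matrix.mul_one]
    rw [show PauliString n f = Matrix.of fun x y : Fin n → Fin 2 => ∏ i, pauli (f i) (x i) (y i)
      from rfl, string_braket]
    exact Finset.prod_congr rfl fun i _ => dval0 (f i)
  · simp only [Fin.val_one, pow_one]
    rw [show HadN n = Matrix.of fun x y : Fin n → Fin 2 => ∏ i, Hmat (x i) (y i) from rfl,
      show PauliString n f = Matrix.of fun x y : Fin n → Fin 2 => ∏ i, pauli (f i) (x i) (y i)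
        from rfl, string_mul, string_mul, string_braket]
    exact Finset.prod_congr rfl fun i _ => dval1 (f i)

lemma dabs (t : Fin 2) (k : Fin 4) : ‖dval t k‖ ≤ 1 := by
  fin_cases t <;> fin_cases k <;> simp [dval]

lemma dzero (k : Fin 4) (hk : k ≠ 0) : dval 0 k = 0 ∨ dval 1 k = 0 := by
  fin_cases k
  · exact absurd rfl hk
  · right; simp [dval]
  · left; simp [dval]
  · left; simp [dval]

/-- For any nonidentity Pauli string `P`, averaging over the random Hadamard layer,
`(1/2) ∑_{t∈{0,1}} |⟨+|^⊗n (H^⊗n)^t P (H^⊗n)^t |+⟩^⊗n|² ≤ 1/2`. -/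
theorem hadamard_twirl_detection (n : ℕ) (hn : 1 ≤ n)
    (f : Fin n → Fin 4) (hf : f ≠ fun _ => 0) :
    (1 / 2 : ℝ) * ∑ t : Fin 2,
        ‖plusBraket n
          (HadN n ^ (t : ℕ) * PauliString n f * HadN n ^ (t : ℕ))‖ ^ 2
      ≤ 1 / 2 := by
  simp only [term_eq]
  -- each term's abs ≤ 1
  have habs : ∀ t : Fin 2, ‖∏ i, dval t (f i)‖ ≤ 1 := by
    intro t
    rw [norm_prod]
    apply Finset.prod_le_one (fun i _ => norm_nonneg _)
    intro i _
    exact dabs t (f i)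
  -- some index is nonzero
  obtain ⟨i0, hi0⟩ : ∃ i, f i ≠ 0 := by
    by_contra h
    push_neg at h
    exact hf (funext h)
  have hzero : dval 0 (f i0) = 0 ∨ dval 1 (f i0) = 0 := dzero (f i0) hi0
  rw [Fin.sum_univ_two]
  have h0 := habs 0
  have h1 := habs 1
  have key : ‖∏ i, dval 0 (f i)‖ ^ 2 + ‖∏ i, dval 1 (f i)‖ ^ 2 ≤ 1 := by
    rcases hzero with h | h
    · rw [Finset.prod_eq_zero (Finset.mem_univ i0) h]
      simp only [norm_zero]
      nlinarith [norm_nonneg (∏ i, dval 1 (f i))]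
    · rw [show (∏ i, dval 1 (f i)) = 0 from Finset.prod_eq_zero (Finset.mem_univ i0) h]
      simp only [norm_zero]
      nlinarith [norm_nonneg (∏ i, dval 0 (f i))]
  linarith
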